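/- Let f be holomorphic on the upper half-plane with 0 < Im f(z) < π for all z ∈ ℍ, and set Φ = e^f. Then for every δ ∈ (0,1), both Φ and 1/Φ belong to the Hardy space H_δ of the upper half-plane; equivalently, sup_{0≤r<1} ∫_{−π}^{π} |Φ_D(re^{iθ})|^{±δ} dθ < ∞ where Φ_D(w) := Φ(i(1−w)/(1+w)). -/

import Mathlib

open Complex MeasureTheory intervalIntegral Metric Real

-- mean value property for holomorphic functions on the unit disk
lemma mv_aux {G : ℂ → ℂ} (hG : DifferentiableOn ℂ G (ball 0 1)) {r : ℝ}
    (hr0 : 0 < r) (hr1 : r < 1) :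
    ∫ θ in (0:ℝ)..(2*Real.pi), G (r * Complex.exp (θ * Complex.I)) = 2*Real.pi * G 0 := by
  have hsub : closedBall (0:ℂ) r ⊆ ball 0 1 := closedBall_subset_ball hr1
  have h := (hG.mono hsub).circleIntegral_sub_inv_smul (w := 0) (mem_ball_self hr0)
  have h2 : (∮ z in C(0, r), (z - 0)⁻¹ • G z)
      = ∫ θ in (0:ℝ)..(2*Real.pi), Complex.I * G (r * Complex.exp (θ * Complex.I)) := by
    rw [circleIntegral]
    refine intervalIntegral.integral_congr fun θ _ => ?_
    have hne : circleMap 0 r θ ≠ 0 := circleMap_ne_center hr0.ne'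
    simp only [deriv_circleMap, sub_zero, smul_eq_mul, circleMap, zero_add] at *
    field_simp
    exact mul_div_cancel_left₀ _ (by exact_mod_cast hr0.ne')
  rw [h2, intervalIntegral.integral_const_mul] at h
  have hI : (Complex.I : ℂ) ≠ 0 := Complex.I_ne_zero
  have h3 : Complex.I * (∫ θ in (0:ℝ)..(2*Real.pi), G (r * Complex.exp (θ * Complex.I)))
      = Complex.I * (2*Real.pi * G 0) := by rw [h, smul_eq_mul]; ring
  exact mul_left_cancel₀ hI h3

lemma re_exp_ge {z : ℂ} {d : ℝ} (hz : |z.im| ≤ d) (hd : d ≤ Real.pi) :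
    Real.exp z.re * Real.cos d ≤ (Complex.exp z).re := by
  rw [Complex.exp_re]
  have h1 : Real.cos d ≤ Real.cos |z.im| :=
    Real.cos_le_cos_of_nonneg_of_le_pi (abs_nonneg _) hd hz
  rw [Real.cos_abs] at h1
  nlinarith [Real.exp_pos z.re]

lemma side {u : ℂ → ℂ} (hu : DifferentiableOn ℂ u (ball 0 1)) {c : ℝ}
    (hc : c ≤ Real.pi) (hcos : 0 < Real.cos c)
    (him : ∀ w ∈ ball (0:ℂ) 1, |(u w).im - c| ≤ c) :
    ∀ r : ℝ, 0 < r → r < 1 →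
      (∫ θ in (0:ℝ)..2*Real.pi,
          Real.exp ((u ((r:ℂ) * Complex.exp (θ * Complex.I))).re))
        ≤ 2*Real.pi * (Complex.exp (u 0 - Complex.I * c)).re / Real.cos c := by
  intro r hr0 hr1
  set G : ℂ → ℂ := fun w => Complex.exp (u w - Complex.I * (c:ℂ)) with hGdef
  have hGd : DifferentiableOn ℂ G (ball 0 1) := (hu.sub_const _).cexp
  have hmapball : ∀ θ : ℝ, (r:ℂ) * Complex.exp (θ * Complex.I) ∈ ball (0:ℂ) 1 := by
    intro θ
    rw [mem_ball_zero_iff, norm_mul, Complex.norm_real, Real.norm_eq_abs,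
      Complex.norm_exp_ofReal_mul_I, mul_one, abs_of_pos hr0]
    exact hr1
  have ccirc : Continuous fun θ : ℝ => (r:ℂ) * Complex.exp (θ * Complex.I) :=
    continuous_const.mul (Complex.continuous_exp.comp
      (Complex.continuous_ofReal.mul continuous_const))
  have hGc : Continuous fun θ : ℝ => G ((r:ℂ) * Complex.exp (θ * Complex.I)) :=
    hGd.continuousOn.comp_continuous ccirc hmapball
  have huc : Continuous fun θ : ℝ => u ((r:ℂ) * Complex.exp (θ * Complex.I)) :=
    hu.continuousOn.comp_continuous ccirc hmapball
  have key : ∀ w ∈ ball (0:ℂ) 1,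
      Real.exp ((u w).re) ≤ (G w).re * (Real.cos c)⁻¹ := by
    intro w hw
    have h1 : |(u w - Complex.I * (c:ℂ)).im| ≤ c := by
      simpa using him w hw
    have h2 : (u w - Complex.I * (c:ℂ)).re = (u w).re := by simp
    have := re_exp_ge h1 hc
    rw [h2] at this
    show Real.exp ((u w).re) ≤ (Complex.exp (u w - Complex.I * (c:ℂ))).re * (Real.cos c)⁻¹
    rw [← div_eq_mul_inv, le_div_iff₀ hcos]
    exact this
  have hmono : (∫ θ in (0:ℝ)..2*Real.pi,
        Real.exp ((u ((r:ℂ) * Complex.exp (θ * Complex.I))).re))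
      ≤ ∫ θ in (0:ℝ)..2*Real.pi,
        (G ((r:ℂ) * Complex.exp (θ * Complex.I))).re * (Real.cos c)⁻¹ := by
    refine intervalIntegral.integral_mono_on (by positivity)
      ?_ ?_ (fun θ _ => key _ (hmapball θ))
    · exact (Real.continuous_exp.comp (Complex.continuous_re.comp huc)).intervalIntegrable _ _
    · exact ((Complex.continuous_re.comp hGc).mul continuous_const).intervalIntegrable _ _
  refine hmono.trans ?_
  rw [intervalIntegral.integral_mul_const]
  have hre : (∫ θ in (0:ℝ)..2*Real.pi, (G ((r:ℂ) * Complex.exp (θ * Complex.I))).re)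
      = 2*Real.pi * (G 0).re := by
    have hint : IntervalIntegrable (fun θ : ℝ => G ((r:ℂ) * Complex.exp (θ * Complex.I)))
        volume 0 (2*Real.pi) := hGc.intervalIntegrable _ _
    have := Complex.reCLM.intervalIntegral_comp_comm hint
    simp only [Complex.reCLM_apply] at this
    rw [this, mv_aux hGd hr0 hr1]
    simp [Complex.mul_re, Complex.ofReal_re, Complex.ofReal_im]
  rw [hre, div_eq_mul_inv]

theorem stmt_15 (f : ℂ → ℂ)
    (hdiff : DifferentiableOn ℂ f {z : ℂ | 0 < z.im})
    (him : ∀ z : ℂ, 0 < z.im → 0 < (f z).im ∧ (f z).im < Real.pi)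
    (δ : ℝ) (hδ : δ ∈ Set.Ioo (0 : ℝ) 1) :
    ∃ C : ℝ, ∀ r : ℝ, 0 ≤ r → r < 1 →
      (∫ θ in (-Real.pi)..Real.pi,
          ‖Complex.exp (f (Complex.I * (1 - r * Complex.exp (θ * Complex.I)) /
            (1 + r * Complex.exp (θ * Complex.I))))‖ ^ δ) ≤ C ∧
      (∫ θ in (-Real.pi)..Real.pi,
          ‖Complex.exp (-f (Complex.I * (1 - r * Complex.exp (θ * Complex.I)) /
            (1 + r * Complex.exp (θ * Complex.I))))‖ ^ δ) ≤ C := by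
  obtain ⟨hδ0, hδ1⟩ := hδ
  have hπ := Real.pi_pos
  set c : ℝ := δ * Real.pi / 2 with hcdef
  have hcπ : c ≤ Real.pi := by rw [hcdef]; nlinarith
  have hcos : 0 < Real.cos c := by
    apply Real.cos_pos_of_mem_Ioo
    constructor <;> [nlinarith; nlinarith]
  set T : ℂ → ℂ := fun w => Complex.I * (1 - w) / (1 + w) with hTdef
  have hT1 : ∀ w : ℂ, ‖w‖ < 1 → (1 + w) ≠ 0 := by
    intro w hw h
    have : w = -1 := by linear_combination h - (1:ℂ)
    rw [this] at hw; simp at hw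
  have hTim : ∀ w ∈ ball (0:ℂ) 1, 0 < (T w).im := by
    intro w hw
    rw [mem_ball_zero_iff] at hw
    have hne := hT1 w hw
    have hnsq : 0 < Complex.normSq (1+w) := Complex.normSq_pos.mpr hne
    have hw2 : Complex.normSq w < 1 := by
      rw [Complex.normSq_eq_norm_sq]; nlinarith [norm_nonneg w]
    have hnum : (T w).im = (1 - Complex.normSq w) / Complex.normSq (1+w) := by
      rw [hTdef]
      simp only [Complex.div_im, Complex.mul_im, Complex.mul_re, Complex.sub_re,
        Complex.sub_im, Complex.add_re, Complex.add_im, Complex.I_re, Complex.I_im,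
        Complex.one_re, Complex.one_im, Complex.normSq_apply]
      ring
    rw [hnum]
    apply div_pos (by linarith) hnsq
  have hTd : DifferentiableOn ℂ T (ball 0 1) := by
    apply DifferentiableOn.div
    · exact (differentiable_const _ |>.mul ((differentiable_const _).sub
        differentiable_id)).differentiableOn
    · exact ((differentiable_const _).add differentiable_id).differentiableOn
    · intro w hw; exact hT1 w (mem_ball_zero_iff.mp hw)
  have hfT : DifferentiableOn ℂ (fun w => f (T w)) (ball 0 1) :=
    hdiff.comp hTd (fun w hw => hTim w hw)
  set u₁ : ℂ → ℂ := fun w => (δ:ℂ) * f (T w) with hu₁def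
  set u₂ : ℂ → ℂ := fun w => -(δ:ℂ) * f (T w) + Complex.I * ((δ * Real.pi : ℝ):ℂ) with hu₂def
  have hu₁d : DifferentiableOn ℂ u₁ (ball 0 1) := hfT.const_mul _
  have hu₂d : DifferentiableOn ℂ u₂ (ball 0 1) := (hfT.const_mul _).add_const _
  have hu₁im : ∀ w ∈ ball (0:ℂ) 1, |(u₁ w).im - c| ≤ c := by
    intro w hw
    obtain ⟨h1, h2⟩ := him (T w) (hTim w hw)
    rw [hu₁def]
    simp only [Complex.mul_im, Complex.ofReal_re, Complex.ofReal_im, zero_mul, add_zero,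
      hcdef]
    rw [abs_le]; constructor <;> nlinarith
  have hu₂im : ∀ w ∈ ball (0:ℂ) 1, |(u₂ w).im - c| ≤ c := by
    intro w hw
    obtain ⟨h1, h2⟩ := him (T w) (hTim w hw)
    rw [hu₂def]
    simp only [Complex.add_im, Complex.mul_im, Complex.neg_re, Complex.neg_im,
      Complex.ofReal_re, Complex.ofReal_im, Complex.I_re, Complex.I_im, zero_mul, add_zero,
      one_mul, mul_zero, zero_add, neg_zero, hcdef]
    rw [abs_le]; constructor <;> nlinarith
  have hu₁re : ∀ w, (u₁ w).re = δ * (f (T w)).re := by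
    intro w; rw [hu₁def]; simp [Complex.mul_re]
  have hu₂re : ∀ w, (u₂ w).re = -(δ * (f (T w)).re) := by
    intro w; rw [hu₂def]
    simp [Complex.add_re, Complex.mul_re]
  have hS₁ := side hu₁d hcπ hcos hu₁im
  have hS₂ := side hu₂d hcπ hcos hu₂im
  have hb₁ : (Complex.exp (u₁ 0 - Complex.I * c)).re ≤ Real.exp ((u₁ 0).re) := by
    calc (Complex.exp (u₁ 0 - Complex.I * c)).re ≤ ‖Complex.exp (u₁ 0 - Complex.I * c)‖ :=
          Complex.re_le_norm _
      _ = Real.exp ((u₁ 0).re) := by rw [Complex.norm_exp]; congr 1; simp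
  have hb₂ : (Complex.exp (u₂ 0 - Complex.I * c)).re ≤ Real.exp ((u₂ 0).re) := by
    calc (Complex.exp (u₂ 0 - Complex.I * c)).re ≤ ‖Complex.exp (u₂ 0 - Complex.I * c)‖ :=
          Complex.re_le_norm _
      _ = Real.exp ((u₂ 0).re) := by rw [Complex.norm_exp]; congr 1; simp
  set M : ℝ := Real.exp ((u₁ 0).re) + Real.exp ((u₂ 0).re) with hMdef
  have hM₁ : Real.exp ((u₁ 0).re) ≤ M := by
    rw [hMdef]; nlinarith [Real.exp_pos ((u₂ 0).re)]
  have hM₂ : Real.exp ((u₂ 0).re) ≤ M := by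
    rw [hMdef]; nlinarith [Real.exp_pos ((u₁ 0).re)]
  have hMpos : 0 < M := by positivity
  refine ⟨2*Real.pi * M / Real.cos c, ?_⟩
  intro r hr0 hr1
  -- rewrite both integrands
  have hcirc : ∀ θ : ℝ, (Complex.I * (1 - (r:ℂ) * Complex.exp (θ * Complex.I)) /
      (1 + (r:ℂ) * Complex.exp (θ * Complex.I))) = T ((r:ℂ) * Complex.exp (θ * Complex.I)) := by
    intro θ; rw [hTdef]
  have he₁ : ∀ θ : ℝ, ‖Complex.exp (f (Complex.I * (1 - (r:ℂ) * Complex.exp (θ * Complex.I)) /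
      (1 + (r:ℂ) * Complex.exp (θ * Complex.I))))‖ ^ δ
      = Real.exp ((u₁ ((r:ℂ) * Complex.exp (θ * Complex.I))).re) := by
    intro θ
    rw [hcirc θ, Complex.norm_exp, ← Real.exp_mul, hu₁re, mul_comm]
  have he₂ : ∀ θ : ℝ, ‖Complex.exp (-f (Complex.I * (1 - (r:ℂ) * Complex.exp (θ * Complex.I)) /
      (1 + (r:ℂ) * Complex.exp (θ * Complex.I))))‖ ^ δ
      = Real.exp ((u₂ ((r:ℂ) * Complex.exp (θ * Complex.I))).re) := by
    intro θ
    rw [hcirc θ, Complex.norm_exp, ← Real.exp_mul, hu₂re, Complex.neg_re]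
    ring_nf
  rw [intervalIntegral.integral_congr (fun θ _ => he₁ θ),
    intervalIntegral.integral_congr (fun θ _ => he₂ θ)]
  have hfin : ∀ u : ℂ → ℂ,
      (∫ θ in (0:ℝ)..2*Real.pi, Real.exp ((u ((r:ℂ) * Complex.exp (θ * Complex.I))).re))
        ≤ 2*Real.pi * (Complex.exp (u 0 - Complex.I * c)).re / Real.cos c →
      (Complex.exp (u 0 - Complex.I * c)).re ≤ M →
      (∫ θ in (-Real.pi)..Real.pi, Real.exp ((u ((r:ℂ) * Complex.exp (θ * Complex.I))).re))
        ≤ 2*Real.pi * M / Real.cos c := by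
    intro u hS hb
    have hper : Function.Periodic
        (fun θ : ℝ => Real.exp ((u ((r:ℂ) * Complex.exp (θ * Complex.I))).re)) (2*Real.pi) := by
      intro θ
      have hθ : ((θ + 2*Real.pi : ℝ):ℂ) * Complex.I = (θ:ℂ)*Complex.I + 2*Real.pi*Complex.I := by
        push_cast; ring
      simp only [hθ, Complex.exp_add, Complex.exp_two_pi_mul_I, mul_one]
    have heq := hper.intervalIntegral_add_eq (-Real.pi) 0
    rw [show -Real.pi + 2*Real.pi = Real.pi by ring, zero_add] at heq
    rw [heq]
    refine hS.trans ?_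
    gcongr
  rcases eq_or_lt_of_le hr0 with hr0' | hr0'
  · -- r = 0
    subst hr0'
    constructor
    · simp only [Complex.ofReal_zero, zero_mul, intervalIntegral.integral_const, smul_eq_mul]
      rw [le_div_iff₀ hcos]
      nlinarith [mul_le_mul hM₁ (Real.cos_le_one c) hcos.le hMpos.le, hπ]
    · simp only [Complex.ofReal_zero, zero_mul, intervalIntegral.integral_const, smul_eq_mul]
      rw [le_div_iff₀ hcos]
      nlinarith [mul_le_mul hM₂ (Real.cos_le_one c) hcos.le hMpos.le, hπ]
  · constructor
    · exact hfin u₁ (hS₁ r hr0' hr1) (hb₁.trans hM₁)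
    · exact hfin u₂ (hS₂ r hr0' hr1) (hb₂.trans hM₂)
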